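/- Let ξ > 0 and a < b. Define f(t) = (1/ξ²)·(1 - sinh(ξ(t-a))/sinh(ξ(b-a)) + sinh(ξ(t-b))/sinh(ξ(b-a))). Then the maximum of f on [a,b] is attained at t* = (a+b)/2 and equals (b-a)² · M*(ξ(b-a)), where M*(x) = (sinh x - 2 sinh(x/2))/(x² sinh x). -/

import Mathlib

open Real Set

theorem stmt_6 (ξ a b : ℝ) (hξ : 0 < ξ) (hab : a < b) :
    let f : ℝ → ℝ := fun t => (1 / ξ ^ 2) *
      (1 - Real.sinh (ξ * (t - a)) / Real.sinh (ξ * (b - a))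
         + Real.sinh (ξ * (t - b)) / Real.sinh (ξ * (b - a)))
    let Mstar : ℝ → ℝ := fun x =>
      (Real.sinh x - 2 * Real.sinh (x / 2)) / (x ^ 2 * Real.sinh x)
    f ((a + b) / 2) = (b - a) ^ 2 * Mstar (ξ * (b - a)) ∧
    ∀ t ∈ Set.Icc a b, f t ≤ f ((a + b) / 2) := by
  intro f Mstar
  have hx : 0 < ξ * (b - a) := mul_pos hξ (by linarith)
  have hs : 0 < Real.sinh (ξ * (b - a)) := Real.sinh_pos_iff.mpr hx
  have hh : 0 < Real.sinh (ξ * (b - a) / 2) := Real.sinh_pos_iff.mpr (by linarith)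
  have key : ∀ t, f t = (1 / ξ ^ 2) *
      (1 - 2 * Real.cosh (ξ * (t - (a + b) / 2)) * Real.sinh (ξ * (b - a) / 2)
            / Real.sinh (ξ * (b - a))) := by
    intro t
    have hA : ξ * (t - a) = ξ * (t - (a + b) / 2) + ξ * (b - a) / 2 := by ring
    have hB : ξ * (t - b) = ξ * (t - (a + b) / 2) - ξ * (b - a) / 2 := by ring
    simp only [f]
    rw [hA, hB, Real.sinh_add, Real.sinh_sub]
    ring
  constructor
  · rw [key]
    simp only [Mstar, sub_self, mul_zero, Real.cosh_zero, mul_one]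
    have hba : b - a ≠ 0 := sub_ne_zero.mpr hab.ne'
    field_simp
  · intro t ht
    rw [key t, key ((a + b) / 2)]
    simp only [sub_self, mul_zero, Real.cosh_zero, mul_one]
    have hc : (1 : ℝ) ≤ Real.cosh (ξ * (t - (a + b) / 2)) := Real.one_le_cosh _
    gcongr
    · linarith
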